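/- Let (g, ω) be a finite-dimensional symplectic Lie algebra and let ∗ be the left-symmetric product defined by ω(x, y∗z) = ω([x,y], z). Then ω is exact (i.e., there exists f ∈ g* with ω(x,y) = f([x,y]) for all x,y) if and only if the left-symmetric algebra (g, ∗) has a right identity, i.e., an element e with x∗e = x for all x ∈ g. -/
import Mathlib


/-- A symplectic Lie algebra `(g, ω)` is Frobenius (i.e. `ω` is exact) if and
only if the compatible left-symmetric product defined by
`ω(x, y∗z) = ω([x,y], z)` has a right identity. -/
theorem frobenius_iff_right_identity {F : Type*} [Field F] {g : Type*} [LieRing g]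
    [LieAlgebra F g] [FiniteDimensional F g]
    (ω : g →ₗ[F] g →ₗ[F] F)
    (hskew : ∀ x y : g, ω x y = - ω y x)
    (hnd : ∀ x : g, (∀ y : g, ω x y = 0) → x = 0)
    (hclosed : ∀ x y z : g, ω ⁅x, y⁆ z + ω ⁅y, z⁆ x + ω ⁅z, x⁆ y = 0)
    (mul : g →ₗ[F] g →ₗ[F] g)
    (hmul : ∀ x y z : g, ω x (mul y z) = ω ⁅x, y⁆ z) :
    (∃ f : Module.Dual F g, ∀ x y : g, ω x y = f ⁅x, y⁆)
      ↔ ∃ e : g, ∀ x : g, mul x e = x := by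
  constructor
  · rintro ⟨f, hf⟩
    -- ω : g →ₗ Dual is injective, hence surjective by dimension count
    have hinj : Function.Injective ω := by
      intro a b hab
      have h0 : ∀ y, ω (a - b) y = 0 := by
        intro y; simp [map_sub, hab]
      have := hnd _ h0
      exact sub_eq_zero.mp this
    have hsurj : Function.Surjective ω :=
      (LinearMap.injective_iff_surjective_of_finrank_eq_finrank
        (Subspace.dual_finrank_eq).symm).mp hinj
    obtain ⟨e, he⟩ := hsurj (-f)
    refine ⟨e, fun x => ?_⟩
    have key : ∀ y, ω y (mul x e - x) = 0 := by
      intro y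
      have h1 : ω y (mul x e) = ω ⁅y, x⁆ e := hmul y x e
      have h2 : ω ⁅y, x⁆ e = - ω e ⁅y, x⁆ := hskew _ _
      have h3 : ω e ⁅y, x⁆ = - f ⁅y, x⁆ := by rw [he]; simp
      have h4 : ω y x = f ⁅y, x⁆ := hf y x
      simp only [map_sub]
      rw [h1, h2, h3, h4]; ring
    have key2 : ∀ y, ω (mul x e - x) y = 0 := by
      intro y; rw [hskew, key y, neg_zero]
    exact sub_eq_zero.mp (hnd _ key2)
  · rintro ⟨e, he⟩
    refine ⟨ω.flip e, fun x y => ?_⟩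
    have : ω ⁅x, y⁆ e = ω x (mul y e) := (hmul x y e).symm
    simp only [LinearMap.flip_apply]
    rw [this, he y]
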